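/- Let G be a finite 2-group generated by a₁, a₂, a₃ with G₂ = ⟨c₁₂, c₁₃, G₃⟩ where c_{ij} = [a_i, a_j], and suppose G₂/G₃ ≅ (Z/2)². If G₃ = ⟨c₁₂², c₁₃², G₄⟩, then for all j ≥ 2, G_j = ⟨c₁₂^{2^{j-2}}, c₁₃^{2^{j-2}}⟩ · G_{j+1}, and in fact G_j = G₂^{2^{j-2}} for j ≥ 2. -/

import Mathlib

/-- The commutator `[x,y] = x⁻¹y⁻¹xy`. -/
def commu {G : Type*} [Group G] (x y : G) : G := x⁻¹ * y⁻¹ * x * y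

open scoped commutatorElement

namespace LcsPowersAux

open Subgroup

variable {G : Type*} [Group G]

lemma lcs_succ' (n : ℕ) :
    (⊤ : Subgroup G).lowerCentralSeries (n + 1) = ⁅(⊤ : Subgroup G).lowerCentralSeries n, ⊤⁆ := rfl

lemma three_subgroups_le {H₁ H₂ H₃ N : Subgroup G} [N.Normal]
    (h1 : ⁅⁅H₂, H₃⁆, H₁⁆ ≤ N) (h2 : ⁅⁅H₃, H₁⁆, H₂⁆ ≤ N) : ⁅⁅H₁, H₂⁆, H₃⁆ ≤ N := by
  have key : ∀ K : Subgroup G, K.map (QuotientGroup.mk' N) = ⊥ ↔ K ≤ N := fun K => by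
    rw [Subgroup.map_eq_bot_iff, QuotientGroup.ker_mk']
  rw [← key, Subgroup.map_commutator, Subgroup.map_commutator]
  exact Subgroup.commutator_commutator_eq_bot_of_rotate
    (by rw [← Subgroup.map_commutator, ← Subgroup.map_commutator, key]; exact h1)
    (by rw [← Subgroup.map_commutator, ← Subgroup.map_commutator, key]; exact h2)

lemma lcs_comm (n m : ℕ) :
    ⁅(⊤ : Subgroup G).lowerCentralSeries m, (⊤ : Subgroup G).lowerCentralSeries n⁆ ≤ (⊤ : Subgroup G).lowerCentralSeries (m + n + 1) := by
  induction n generalizing m with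
  | zero => rw [Subgroup.lowerCentralSeries_zero, ← lcs_succ']
  | succ n ih =>
    rw [lcs_succ' n, Subgroup.commutator_comm]
    refine three_subgroups_le ?_ ?_
    · have e1 : ⁅(⊤ : Subgroup G), (⊤ : Subgroup G).lowerCentralSeries m⁆ = (⊤ : Subgroup G).lowerCentralSeries (m + 1) := by
        rw [Subgroup.commutator_comm, ← lcs_succ']
      rw [e1]
      have e2 : m + 1 + n + 1 = m + (n + 1) + 1 := by omega
      exact e2 ▸ ih (m + 1)
    · calc ⁅⁅(⊤ : Subgroup G).lowerCentralSeries m, (⊤ : Subgroup G).lowerCentralSeries n⁆, (⊤ : Subgroup G)⁆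
          ≤ ⁅(⊤ : Subgroup G).lowerCentralSeries (m + n + 1), (⊤ : Subgroup G)⁆ :=
            Subgroup.commutator_mono (ih m) le_rfl
        _ ≤ (⊤ : Subgroup G).lowerCentralSeries (m + (n + 1) + 1) := le_of_eq (lcs_succ' _).symm

/-- Commutators of elements of `L a` and `L b` lie in `L k` whenever `k ≤ a + b + 1`. -/
lemma mem_comm_lcs {a b k : ℕ} {x y : G}
    (hx : x ∈ (⊤ : Subgroup G).lowerCentralSeries a) (hy : y ∈ (⊤ : Subgroup G).lowerCentralSeries b)
    (hk : k ≤ a + b + 1) : ⁅x, y⁆ ∈ (⊤ : Subgroup G).lowerCentralSeries k :=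
  Subgroup.lowerCentralSeries_antitone ⊤ hk (lcs_comm b a (Subgroup.commutator_mem_commutator hx hy))

/-- If `G/G'` has exponent 2, then all the lower central quotients have exponent 2. -/
lemma sq_mem (hsq1 : ∀ g : G, g ^ 2 ∈ (⊤ : Subgroup G).lowerCentralSeries 1) :
    ∀ j, ∀ x ∈ (⊤ : Subgroup G).lowerCentralSeries j, x ^ 2 ∈ (⊤ : Subgroup G).lowerCentralSeries (j + 1) := by
  intro j
  induction j with
  | zero => exact fun x _ => hsq1 x
  | succ j ih =>
    intro x hx
    rw [lcs_succ', Subgroup.commutator_def] at hx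
    induction hx using Subgroup.closure_induction with
    | mem y hy =>
      obtain ⟨h, hh, g, -, rfl⟩ := hy
      have hu : ⁅h, g⁆ ∈ (⊤ : Subgroup G).lowerCentralSeries (j + 1) := by
        rw [lcs_succ']
        exact Subgroup.commutator_mem_commutator hh (Subgroup.mem_top g)
      have h1 : ⁅h ^ 2, g⁆ ∈ (⊤ : Subgroup G).lowerCentralSeries (j + 2) := by
        rw [lcs_succ']
        exact Subgroup.commutator_mem_commutator (ih h hh) (Subgroup.mem_top g)
      have h2 : ⁅⁅h, g⁆⁻¹, h⁆ ∈ (⊤ : Subgroup G).lowerCentralSeries (j + 2) :=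
        mem_comm_lcs (inv_mem hu) hh (by omega)
      have key : ⁅h,g⁆^2 = ⁅h^2,g⁆ * (⁅h,g⁆⁻¹ * ⁅⁅h,g⁆⁻¹,h⁆⁻¹ * (⁅h,g⁆⁻¹)⁻¹) := by
        simp only [commutatorElement_def, pow_two]; group
      rw [key]
      exact mul_mem h1 ((Subgroup.lowerCentralSeries_normal ⊤ (j + 2)).conj_mem _ (inv_mem h2) _)
    | one => simpa using one_mem ((⊤ : Subgroup G).lowerCentralSeries (j + 2))
    | mul u v hu hv pu pv =>
      have hu' : u ∈ (⊤ : Subgroup G).lowerCentralSeries (j + 1) := by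
        rw [lcs_succ', Subgroup.commutator_def]; exact hu
      have hv' : v ∈ (⊤ : Subgroup G).lowerCentralSeries (j + 1) := by
        rw [lcs_succ', Subgroup.commutator_def]; exact hv
      have hw : ⁅v⁻¹, u⁻¹⁆ ∈ (⊤ : Subgroup G).lowerCentralSeries (j + 2) :=
        mem_comm_lcs (inv_mem hv') (inv_mem hu') (by omega)
      have key : (u*v)^2 = u^2 * v^2 * (v⁻¹ * ⁅v⁻¹,u⁻¹⁆ * (v⁻¹)⁻¹) := by
        simp only [commutatorElement_def, pow_two]; group
      rw [key]
      exact mul_mem (mul_mem pu pv)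
        ((Subgroup.lowerCentralSeries_normal ⊤ (j + 2)).conj_mem _ hw _)
    | inv u hu pu => rw [inv_pow]; exact inv_mem pu

lemma pow2_mem (hsq1 : ∀ g : G, g ^ 2 ∈ (⊤ : Subgroup G).lowerCentralSeries 1) :
    ∀ m, ∀ y ∈ (⊤ : Subgroup G).lowerCentralSeries 1, y ^ 2 ^ m ∈ (⊤ : Subgroup G).lowerCentralSeries (m + 1) := by
  intro m
  induction m with
  | zero => intro y hy; simpa using hy
  | succ m ih =>
    intro y hy
    rw [pow_succ, pow_mul]
    exact sq_mem hsq1 (m + 1) _ (ih y hy)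

/-- The auxiliary subgroups `⟨c^(2^j), d^(2^j)⟩ · G_{j+3}`. -/
def Kc (c d : G) (j : ℕ) : Subgroup G :=
  Subgroup.closure ({c ^ 2 ^ j, d ^ 2 ^ j} ∪ ((⊤ : Subgroup G).lowerCentralSeries (j + 2) : Set G))

lemma Kc_eq (c d : G) (j : ℕ) : Kc c d j =
    Subgroup.closure ({c ^ 2 ^ j, d ^ 2 ^ j} ∪ ((⊤ : Subgroup G).lowerCentralSeries (j + 2) : Set G)) := rfl

lemma lcs_le_Kc (c d : G) (j : ℕ) : (⊤ : Subgroup G).lowerCentralSeries (j + 2) ≤ Kc c d j :=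
  fun z hz => subset_closure (Or.inr hz)

variable {c d : G} (hc1 : c ∈ (⊤ : Subgroup G).lowerCentralSeries 1) (hd1 : d ∈ (⊤ : Subgroup G).lowerCentralSeries 1)
  (hsq1 : ∀ g : G, g ^ 2 ∈ (⊤ : Subgroup G).lowerCentralSeries 1)

include hc1 hd1 hsq1 in
lemma Kc_le_lcs (m : ℕ) : Kc c d m ≤ (⊤ : Subgroup G).lowerCentralSeries (m + 1) := by
  rw [Kc_eq]
  refine (closure_le _).mpr (Set.union_subset ?_ ?_)
  · intro x hx
    rcases hx with h | h
    · rw [h]; exact pow2_mem hsq1 m c hc1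
    · rw [Set.mem_singleton_iff] at h; rw [h]; exact pow2_mem hsq1 m d hd1
  · intro x hx
    exact Subgroup.lowerCentralSeries_antitone ⊤ (by omega) hx

include hc1 hd1 hsq1 in
lemma Kc_sq (m : ℕ) : ∀ u ∈ Kc c d m, u ^ 2 ∈ Kc c d (m + 1) := by
  intro u hu
  have hu0 := hu
  rw [Kc_eq] at hu
  induction hu using Subgroup.closure_induction with
  | mem y hy =>
    rcases hy with (h | h) | h
    · rw [h, ← pow_mul, ← pow_succ]
      exact subset_closure (Or.inl (Set.mem_insert _ _))
    · rw [Set.mem_singleton_iff] at h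
      rw [h, ← pow_mul, ← pow_succ]
      exact subset_closure (Or.inl (Set.mem_insert_of_mem _ rfl))
    · exact lcs_le_Kc c d (m + 1) (sq_mem hsq1 (m + 2) y h)
  | one => simpa using one_mem (Kc c d (m + 1))
  | mul x y hx hy px py =>
    have hx' : x ∈ (⊤ : Subgroup G).lowerCentralSeries (m + 1) := Kc_le_lcs hc1 hd1 hsq1 m hx
    have hy' : y ∈ (⊤ : Subgroup G).lowerCentralSeries (m + 1) := Kc_le_lcs hc1 hd1 hsq1 m hy
    have hw : ⁅y⁻¹, x⁻¹⁆ ∈ (⊤ : Subgroup G).lowerCentralSeries (m + 3) :=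
      mem_comm_lcs (inv_mem hy') (inv_mem hx') (by omega)
    have key : (x*y)^2 = x^2 * y^2 * (y⁻¹ * ⁅y⁻¹,x⁻¹⁆ * (y⁻¹)⁻¹) := by
      simp only [commutatorElement_def, pow_two]; group
    rw [key]
    exact mul_mem (mul_mem (px hx) (py hy))
      (lcs_le_Kc c d (m + 1) ((Subgroup.lowerCentralSeries_normal ⊤ (m + 3)).conj_mem _ hw _))
  | inv x hx px => rw [inv_pow]; exact inv_mem (px hx)

include hc1 hd1 hsq1 in
lemma comm_pow2_mem
    (h3 : (⊤ : Subgroup G).lowerCentralSeries 2 =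
      Subgroup.closure ({c ^ 2, d ^ 2} ∪ ((⊤ : Subgroup G).lowerCentralSeries 3 : Set G))) :
    ∀ j, ∀ y ∈ (⊤ : Subgroup G).lowerCentralSeries 1, ∀ g : G, ⁅y ^ 2 ^ j, g⁆ ∈ Kc c d (j + 1) := by
  intro j
  induction j with
  | zero =>
    intro y hy g
    have hmem : ⁅y, g⁆ ∈ (⊤ : Subgroup G).lowerCentralSeries 2 := by
      rw [lcs_succ']
      exact Subgroup.commutator_mem_commutator hy (Subgroup.mem_top g)
    have e : Kc c d 1 = (⊤ : Subgroup G).lowerCentralSeries 2 := by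
      rw [h3, Kc_eq]; norm_num
    rw [e]
    simpa using hmem
  | succ j ih =>
    intro y hy g
    have hx : y ^ 2 ^ j ∈ (⊤ : Subgroup G).lowerCentralSeries (j + 1) := pow2_mem hsq1 j y hy
    have hu : ⁅y ^ 2 ^ j, g⁆ ∈ Kc c d (j + 1) := ih y hy g
    have huL : ⁅y ^ 2 ^ j, g⁆ ∈ (⊤ : Subgroup G).lowerCentralSeries (j + 2) :=
      Kc_le_lcs hc1 hd1 hsq1 (j + 1) hu
    have hw : ⁅⁅y ^ 2 ^ j, g⁆⁻¹, y ^ 2 ^ j⁆ ∈ (⊤ : Subgroup G).lowerCentralSeries (j + 4) :=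
      mem_comm_lcs (inv_mem huL) hx (by omega)
    have hu2 : ⁅y ^ 2 ^ j, g⁆ ^ 2 ∈ Kc c d (j + 2) :=
      Kc_sq hc1 hd1 hsq1 (j + 1) _ hu
    have e : y ^ 2 ^ (j + 1) = (y ^ 2 ^ j) ^ 2 := by rw [← pow_mul, ← pow_succ]
    rw [e]
    have key : ∀ x : G, ⁅x^2,g⁆ = ⁅x,g⁆^2 * (⁅x,g⁆⁻¹ * ⁅⁅x,g⁆⁻¹,x⁆ * (⁅x,g⁆⁻¹)⁻¹) := by
      intro x; simp only [commutatorElement_def, pow_two]; group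
    rw [key]
    exact mul_mem hu2
      (lcs_le_Kc c d (j + 2) ((Subgroup.lowerCentralSeries_normal ⊤ (j + 4)).conj_mem _ hw _))

include hc1 hd1 hsq1 in
lemma lcs_eq_Kc
    (hG2 : (⊤ : Subgroup G).lowerCentralSeries 1 =
      Subgroup.closure ({c, d} ∪ ((⊤ : Subgroup G).lowerCentralSeries 2 : Set G)))
    (h3 : (⊤ : Subgroup G).lowerCentralSeries 2 =
      Subgroup.closure ({c ^ 2, d ^ 2} ∪ ((⊤ : Subgroup G).lowerCentralSeries 3 : Set G))) :
    ∀ j, (⊤ : Subgroup G).lowerCentralSeries (j + 1) = Kc c d j := by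
  intro j
  induction j with
  | zero => rw [hG2, Kc_eq]; norm_num
  | succ j ih =>
    refine le_antisymm ?_ (Kc_le_lcs hc1 hd1 hsq1 (j + 1))
    rw [lcs_succ' (j + 1)]
    refine Subgroup.commutator_le.mpr fun h hh g _ => ?_
    rw [ih, Kc_eq] at hh
    induction hh using Subgroup.closure_induction with
    | mem y hy =>
      rcases hy with (h' | h') | h'
      · rw [h']; exact comm_pow2_mem hc1 hd1 hsq1 h3 j c hc1 g
      · rw [Set.mem_singleton_iff] at h'
        rw [h']; exact comm_pow2_mem hc1 hd1 hsq1 h3 j d hd1 g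
      · exact lcs_le_Kc c d (j + 1)
          (mem_comm_lcs (b := 0) h' (Subgroup.mem_top g) (by omega))
    | one => simpa using one_mem (Kc c d (j + 1))
    | mul u v hu hv pu pv =>
      have hu' : u ∈ (⊤ : Subgroup G).lowerCentralSeries (j + 1) := by
        rw [ih]; exact hu
      have hv2 : ⁅v, g⁆ ∈ (⊤ : Subgroup G).lowerCentralSeries (j + 2) :=
        Kc_le_lcs hc1 hd1 hsq1 (j + 1) pv
      have hw : ⁅⁅v, g⁆⁻¹, u⁆ ∈ (⊤ : Subgroup G).lowerCentralSeries (j + 3) :=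
        mem_comm_lcs (inv_mem hv2) hu' (by omega)
      have key : ⁅u*v,g⁆ = ⁅v,g⁆ * ⁅⁅v,g⁆⁻¹,u⁆ * ⁅u,g⁆ := by
        simp only [commutatorElement_def]; group
      rw [key]
      exact mul_mem (mul_mem pv (lcs_le_Kc c d (j + 1) hw)) pu
    | inv u hu pu =>
      have hu' : u ∈ (⊤ : Subgroup G).lowerCentralSeries (j + 1) := by
        rw [ih]; exact hu
      have hu2 : ⁅u, g⁆ ∈ (⊤ : Subgroup G).lowerCentralSeries (j + 2) :=
        Kc_le_lcs hc1 hd1 hsq1 (j + 1) pu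
      have hw : ⁅⁅u, g⁆, u⁻¹⁆ ∈ (⊤ : Subgroup G).lowerCentralSeries (j + 3) :=
        mem_comm_lcs hu2 (inv_mem hu') (by omega)
      have key : ⁅u⁻¹,g⁆ = ⁅u,g⁆⁻¹ * ⁅⁅u,g⁆,u⁻¹⁆ := by
        simp only [commutatorElement_def]; group
      rw [key]
      exact mul_mem (inv_mem pu) (lcs_le_Kc c d (j + 1) hw)

end LcsPowersAux

open LcsPowersAux Subgroup in
theorem lcs_eq_powers {G : Type*} [Group G] [Finite G]
    (hG : IsPGroup 2 G) (a₁ a₂ a₃ : G)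
    (hgen : Subgroup.closure {a₁, a₂, a₃} = ⊤)
    (h1 : Nonempty ((G ⧸ (⊤ : Subgroup G).lowerCentralSeries 1) ≃*
      Multiplicative (ZMod 2 × ZMod 2 × ZMod 2)))
    (hG2 : (⊤ : Subgroup G).lowerCentralSeries 1 =
      Subgroup.closure ({commu a₁ a₂, commu a₁ a₃} ∪ ((⊤ : Subgroup G).lowerCentralSeries 2 : Set G)))
    (h2 : Nonempty (((⊤ : Subgroup G).lowerCentralSeries 1 ⧸
      ((⊤ : Subgroup G).lowerCentralSeries 2).subgroupOf ((⊤ : Subgroup G).lowerCentralSeries 1)) ≃*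
      Multiplicative (ZMod 2 × ZMod 2)))
    (h3 : (⊤ : Subgroup G).lowerCentralSeries 2 =
      Subgroup.closure ({(commu a₁ a₂) ^ 2, (commu a₁ a₃) ^ 2} ∪
        ((⊤ : Subgroup G).lowerCentralSeries 3 : Set G))) :
    ∀ n : ℕ,
      (⊤ : Subgroup G).lowerCentralSeries (n + 1) =
        Subgroup.closure ({(commu a₁ a₂) ^ 2 ^ n, (commu a₁ a₃) ^ 2 ^ n} ∪
          ((⊤ : Subgroup G).lowerCentralSeries (n + 2) : Set G)) ∧
      (⊤ : Subgroup G).lowerCentralSeries (n + 1) =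
        Subgroup.closure {x : G | ∃ y ∈ (⊤ : Subgroup G).lowerCentralSeries 1, x = y ^ 2 ^ n} := by
  -- the quotient `G/G₂` has exponent 2
  have hsq1 : ∀ g : G, g ^ 2 ∈ (⊤ : Subgroup G).lowerCentralSeries 1 := by
    obtain ⟨e⟩ := h1
    intro g
    have hz : ∀ z : Multiplicative (ZMod 2 × ZMod 2 × ZMod 2), z ^ 2 = 1 := by decide
    have key : (QuotientGroup.mk' ((⊤ : Subgroup G).lowerCentralSeries 1)) (g ^ 2) = 1 := by
      apply e.injective
      rw [map_pow, map_pow, hz, map_one]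
    rwa [← QuotientGroup.ker_mk' ((⊤ : Subgroup G).lowerCentralSeries 1), MonoidHom.mem_ker]
  have hcommu : ∀ x y : G, commu x y = ⁅x⁻¹, y⁻¹⁆ := by
    intro x y; simp only [commutatorElement_def, commu]; group
  have hc1 : commu a₁ a₂ ∈ (⊤ : Subgroup G).lowerCentralSeries 1 := by
    rw [hcommu, lcs_succ' 0]
    exact Subgroup.commutator_mem_commutator (Subgroup.mem_top _) (Subgroup.mem_top _)
  have hd1 : commu a₁ a₃ ∈ (⊤ : Subgroup G).lowerCentralSeries 1 := by
    rw [hcommu, lcs_succ' 0]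
    exact Subgroup.commutator_mem_commutator (Subgroup.mem_top _) (Subgroup.mem_top _)
  have hA := lcs_eq_Kc hc1 hd1 hsq1 hG2 h3
  intro n
  constructor
  · exact hA n
  · -- second claim
    refine le_antisymm ?_ ((closure_le _).mpr ?_)
    · -- `G` is nilpotent, so the lower central series terminates
      haveI : Fact (Nat.Prime 2) := ⟨Nat.prime_two⟩
      obtain ⟨N, hN⟩ := Subgroup.nilpotent_iff_lowerCentralSeries.mp hG.isNilpotent
      have hdesc : ∀ t m, n ≤ m → N ≤ m + 1 + t →
          (⊤ : Subgroup G).lowerCentralSeries (m + 1) ≤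
            Subgroup.closure {x : G | ∃ y ∈ (⊤ : Subgroup G).lowerCentralSeries 1, x = y ^ 2 ^ n} := by
        intro t
        induction t with
        | zero =>
          intro m _ hNm
          have h' : (⊤ : Subgroup G).lowerCentralSeries (m + 1) ≤ (⊤ : Subgroup G).lowerCentralSeries N :=
            Subgroup.lowerCentralSeries_antitone ⊤ (by omega)
          rw [hN] at h'
          exact le_trans h' bot_le
        | succ t ih =>
          intro m hnm hNm
          rw [hA m, Kc_eq]
          refine (closure_le _).mpr (Set.union_subset ?_ ?_)
          · intro x hx
            have hcd : ∀ z : G, z ∈ (⊤ : Subgroup G).lowerCentralSeries 1 →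
                z ^ 2 ^ m ∈
                  Subgroup.closure {x : G | ∃ y ∈ (⊤ : Subgroup G).lowerCentralSeries 1, x = y ^ 2 ^ n} := by
              intro z hz
              refine subset_closure ⟨z ^ 2 ^ (m - n), Subgroup.pow_mem _ hz _, ?_⟩
              rw [← pow_mul, ← pow_add, Nat.sub_add_cancel hnm]
            rcases hx with h' | h'
            · rw [h']; exact hcd _ hc1
            · rw [Set.mem_singleton_iff] at h'; rw [h']; exact hcd _ hd1
          · intro x hx
            exact ih (m + 1) (by omega) (by omega) hx
      exact hdesc N n le_rfl (by omega)
    · rintro x ⟨y, hy, rfl⟩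
      exact pow2_mem hsq1 n y hy
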